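/- Let X be a nonempty compact Hausdorff space and A a unital C(X)-algebra. For every a ∈ A one has ‖a‖ = sup{ ‖a_x‖ : x ∈ X }, and this supremum is attained at some point of X. -/

import Mathlib

/-- The fiber ideal `I_x(A)` of a `C(X)`-algebra `A` with structure map `θ` at a point `x`:
the closed linear span of `{θ(f) * a : f ∈ C(X), f x = 0, a ∈ A}`. -/
def fiberIdeal {X : Type*} [TopologicalSpace X] {A : Type*} [NormedRing A] [StarRing A]
    [NormedAlgebra ℂ A] (θ : C(X, ℂ) →⋆ₐ[ℂ] A) (x : X) : Set A :=
  closure (Submodule.span ℂ {y : A | ∃ (f : C(X, ℂ)) (b : A), f x = 0 ∧ y = θ f * b} : Set A)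

/-- The fiber seminorm `‖a_x‖ := dist(a, I_x(A))`. -/
noncomputable def fiberNorm {X : Type*} [TopologicalSpace X] {A : Type*} [NormedRing A]
    [StarRing A] [NormedAlgebra ℂ A] (θ : C(X, ℂ) →⋆ₐ[ℂ] A) (x : X) (a : A) : ℝ :=
  Metric.infDist a (fiberIdeal θ x)

open Metric Set

section Cplx

variable {X : Type*} [TopologicalSpace X]

/-- Postcomposition of a real continuous function with `Complex.ofReal`. -/
noncomputable def cplx (f : C(X, ℝ)) : C(X, ℂ) :=
  (ContinuousMap.mk Complex.ofReal Complex.continuous_ofReal).comp f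

@[simp] lemma cplx_apply (f : C(X, ℝ)) (y : X) : cplx f y = (f y : ℂ) := rfl

lemma cplx_mul (f g : C(X, ℝ)) : cplx (f * g) = cplx f * cplx g := by
  ext y; push_cast; simp

lemma cplx_one : cplx (1 : C(X, ℝ)) = 1 := by ext y; simp

lemma star_cplx (f : C(X, ℝ)) : star (cplx f) = cplx f := by
  ext y; simp [Complex.conj_ofReal]

lemma cplx_sum {ι : Type*} (t : Finset ι) (f : ι → C(X, ℝ)) :
    cplx (∑ i ∈ t, f i) = ∑ i ∈ t, cplx (f i) := by
  ext y; push_cast; simp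

lemma cplx_real_smul (r : ℝ) (f : C(X, ℝ)) : cplx (r • f) = (r : ℂ) • cplx f := by
  ext y; push_cast; simp

/-- Pointwise square root of a real continuous function. -/
noncomputable def sqrtC (f : C(X, ℝ)) : C(X, ℝ) :=
  (ContinuousMap.mk Real.sqrt Real.continuous_sqrt).comp f

lemma sqrtC_mul_self (f : C(X, ℝ)) (hf : ∀ y, 0 ≤ f y) : sqrtC f * sqrtC f = f := by
  ext y; exact Real.mul_self_sqrt (hf y)

end Cplx

section Conv

variable {X : Type*} [TopologicalSpace X]
variable {A : Type*} [NormedRing A] [StarRing A] [CStarRing A] [CompleteSpace A]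
    [NormedAlgebra ℂ A] [StarModule ℂ A]
variable (θ : C(X, ℂ) →⋆ₐ[ℂ] A)

lemma exists_sqrt_theta (hθ : ∀ (f : C(X, ℂ)) (a : A), θ f * a = a * θ f)
    (f : C(X, ℝ)) (hf : ∀ y, 0 ≤ f y) :
    ∃ w : A, (∀ b : A, w * b = b * w) ∧ star w = w ∧ star w * w = θ (cplx f) := by
  refine ⟨θ (cplx (sqrtC f)), fun b => hθ _ b, ?_, ?_⟩
  · rw [← map_star, star_cplx]
  · rw [← map_star, star_cplx, ← map_mul, ← cplx_mul, sqrtC_mul_self f hf]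

/-- expansion of a conjugated difference -/
lemma expand_conj (u v Z : A) :
    star (u - v) * Z * (u - v) =
      star u * Z * u + star v * Z * v - (star u * Z * v + star v * Z * u) := by
  simp only [star_sub]
  noncomm_ring

lemma convexity_bound (hθ : ∀ (f : C(X, ℂ)) (a : A), θ f * a = a * θ f)
    {ι : Type*} (t : Finset ι) (φ : ι → C(X, ℝ)) (c : ι → A) {M : ℝ} (hM : 0 ≤ M)
    (hφ0 : ∀ i ∈ t, ∀ y, 0 ≤ φ i y) (hφ1 : ∀ y, ∑ i ∈ t, φ i y = 1)
    (hc : ∀ i ∈ t, ‖c i‖ ≤ M) :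
    ‖∑ i ∈ t, θ (cplx (φ i)) * c i‖ ≤ M := by
  letI : CStarAlgebra A :=
    { ‹NormedRing A›, ‹StarRing A›, ‹CStarRing A›, ‹NormedAlgebra ℂ A›, ‹StarModule ℂ A›,
      ‹CompleteSpace A› with }
  letI := CStarAlgebra.spectralOrder A
  haveI := CStarAlgebra.spectralOrderedRing A
  set U : A := ∑ i ∈ t, θ (cplx (φ i)) * c i with hU
  have hone : (∑ i ∈ t, φ i) = (1 : C(X, ℝ)) := by
    ext y; simpa using hφ1 y
  have am_nonneg : ∀ r : ℝ, 0 ≤ r → 0 ≤ algebraMap ℝ A r := by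
    intro r hr
    have h := star_mul_self_nonneg (algebraMap ℝ A (Real.sqrt r))
    rwa [IsSelfAdjoint.algebraMap A (IsSelfAdjoint.all _), ← map_mul,
      Real.mul_self_sqrt hr] at h
  -- notation
  set S : A := ∑ i ∈ t, ∑ j ∈ t, star (c i) * θ (cplx (φ i * φ j)) * c j with hS
  set T : A := ∑ i ∈ t, star (c i) * θ (cplx (φ i)) * c i with hT
  -- collapsing sums
  have hcollapse : ∀ i ∈ t, ∑ j ∈ t, θ (cplx (φ i * φ j)) = θ (cplx (φ i)) := by
    intro i _
    rw [← map_sum, ← cplx_sum, ← Finset.mul_sum, hone, mul_one]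
  have hcollapse' : ∀ j ∈ t, ∑ i ∈ t, θ (cplx (φ i * φ j)) = θ (cplx (φ j)) := by
    intro j _
    rw [← map_sum, ← cplx_sum, ← Finset.sum_mul, hone, one_mul]
  -- star U * U = S
  have hUU : star U * U = S := by
    rw [hU, star_sum, Finset.sum_mul_sum]
    refine Finset.sum_congr rfl fun i _ => Finset.sum_congr rfl fun j _ => ?_
    rw [star_mul, ← map_star, star_cplx, cplx_mul, map_mul]
    noncomm_ring
  -- S ≤ T
  have hQpos : ∀ i ∈ t, ∀ j ∈ t,
      0 ≤ star (c i - c j) * θ (cplx ((2⁻¹ : ℝ) • (φ i * φ j))) * (c i - c j) := by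
    intro i hi j hj
    obtain ⟨w, -, -, hww⟩ := exists_sqrt_theta θ hθ ((2⁻¹ : ℝ) • (φ i * φ j))
      (fun y => by
        have := mul_nonneg (hφ0 i hi y) (hφ0 j hj y)
        simpa using by positivity)
    rw [← hww, show star (c i - c j) * (star w * w) * (c i - c j) =
      star (w * (c i - c j)) * (w * (c i - c j)) by rw [star_mul]; noncomm_ring]
    exact star_mul_self_nonneg _
  have hQeq : ∀ i ∈ t, ∀ j ∈ t,
      star (c i - c j) * θ (cplx ((2⁻¹ : ℝ) • (φ i * φ j))) * (c i - c j) =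
        (2⁻¹ : ℂ) • (star (c i) * θ (cplx (φ i * φ j)) * c i
          + star (c j) * θ (cplx (φ i * φ j)) * c j
          - (star (c i) * θ (cplx (φ i * φ j)) * c j
          + star (c j) * θ (cplx (φ i * φ j)) * c i)) := by
    intro i _ j _
    rw [cplx_real_smul, map_smul, mul_smul_comm, smul_mul_assoc, expand_conj]
    norm_num
  have hsumQ : (∑ i ∈ t, ∑ j ∈ t,
      star (c i - c j) * θ (cplx ((2⁻¹ : ℝ) • (φ i * φ j))) * (c i - c j)) = T - S := by
    rw [Finset.sum_congr rfl fun i hi => Finset.sum_congr rfl fun j hj => hQeq i hi j hj]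
    have e1 : ∑ i ∈ t, ∑ j ∈ t, star (c i) * θ (cplx (φ i * φ j)) * c i = T := by
      refine Finset.sum_congr rfl fun i hi => ?_
      rw [← Finset.sum_mul, ← Finset.mul_sum, hcollapse i hi]
    have e2 : ∑ i ∈ t, ∑ j ∈ t, star (c j) * θ (cplx (φ i * φ j)) * c j = T := by
      rw [Finset.sum_comm]
      refine Finset.sum_congr rfl fun j hj => ?_
      rw [← Finset.sum_mul, ← Finset.mul_sum, hcollapse' j hj]
    have e4 : ∑ i ∈ t, ∑ j ∈ t, star (c j) * θ (cplx (φ i * φ j)) * c i = S := by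
      rw [Finset.sum_comm, hS]
      exact Finset.sum_congr rfl fun j _ => Finset.sum_congr rfl fun i _ => by
        rw [mul_comm (φ i) (φ j)]
    calc (∑ i ∈ t, ∑ j ∈ t, (2⁻¹ : ℂ) • (star (c i) * θ (cplx (φ i * φ j)) * c i
          + star (c j) * θ (cplx (φ i * φ j)) * c j
          - (star (c i) * θ (cplx (φ i * φ j)) * c j
          + star (c j) * θ (cplx (φ i * φ j)) * c i)))
        = (2⁻¹ : ℂ) • ((∑ i ∈ t, ∑ j ∈ t, star (c i) * θ (cplx (φ i * φ j)) * c i)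
          + (∑ i ∈ t, ∑ j ∈ t, star (c j) * θ (cplx (φ i * φ j)) * c j)
          - ((∑ i ∈ t, ∑ j ∈ t, star (c i) * θ (cplx (φ i * φ j)) * c j)
          + (∑ i ∈ t, ∑ j ∈ t, star (c j) * θ (cplx (φ i * φ j)) * c i))) := by
          simp only [← Finset.smul_sum, Finset.sum_add_distrib, Finset.sum_sub_distrib]
      _ = T - S := by rw [e1, e2, e4, ← hS]; rw [show T + T - (S + S) = (2:ℂ) • (T - S) by
            rw [two_smul]; abel, smul_smul]; norm_num
  have hST : S ≤ T := by
    have h0 : 0 ≤ T - S := by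
      rw [← hsumQ]
      exact Finset.sum_nonneg fun i hi => Finset.sum_nonneg fun j hj => hQpos i hi j hj
    exact sub_nonneg.mp h0
  -- T ≤ algebraMap ℝ A (M^2)
  have hTR : T ≤ algebraMap ℝ A (M ^ 2) := by
    have hterm : ∀ i ∈ t, star (c i) * θ (cplx (φ i)) * c i
        ≤ algebraMap ℝ A (M ^ 2) * θ (cplx (φ i)) := by
      intro i hi
      obtain ⟨w, hwc, hws, hww⟩ := exists_sqrt_theta θ hθ (φ i) (hφ0 i hi)
      have h1 : star (c i) * c i ≤ algebraMap ℝ A (M ^ 2) := by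
        calc star (c i) * c i ≤ algebraMap ℝ A (‖c i‖ ^ 2) :=
              CStarAlgebra.star_mul_le_algebraMap_norm_sq
          _ ≤ algebraMap ℝ A (M ^ 2) := by
              rw [← sub_nonneg, ← map_sub]
              exact am_nonneg _ (by nlinarith [norm_nonneg (c i), hc i hi])
      have h2 := star_left_conjugate_le_conjugate h1 w
      have hL : star w * (star (c i) * c i) * w = star (c i) * θ (cplx (φ i)) * c i := by
        rw [hws, ← hww, hws]
        calc w * (star (c i) * c i) * w = (star (c i) * c i) * (w * w) := by
              rw [hwc (star (c i) * c i), mul_assoc]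
          _ = star (c i) * (w * w) * c i := by
              have hc2 : (w * w) * c i = c i * (w * w) := by
                rw [mul_assoc, hwc (c i), ← mul_assoc, hwc (c i), mul_assoc]
              rw [mul_assoc, ← hc2, ← mul_assoc]
      have hR : star w * algebraMap ℝ A (M ^ 2) * w
          = algebraMap ℝ A (M ^ 2) * θ (cplx (φ i)) := by
        rw [hws, ← hww, hws, ← Algebra.commutes (M ^ 2) w, mul_assoc]
      rwa [hL, hR] at h2
    calc T ≤ ∑ i ∈ t, algebraMap ℝ A (M ^ 2) * θ (cplx (φ i)) :=
          Finset.sum_le_sum hterm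
      _ = algebraMap ℝ A (M ^ 2) := by
          rw [← Finset.mul_sum, ← map_sum, ← cplx_sum, hone, cplx_one, map_one, mul_one]
  have hfin : star U * U ≤ algebraMap ℝ A (M ^ 2) := by
    rw [hUU]; exact hST.trans hTR
  have hn := (CStarAlgebra.norm_le_iff_le_algebraMap (star U * U) (by positivity)
    (star_mul_self_nonneg U)).mpr hfin
  rw [CStarRing.norm_star_mul_self] at hn
  nlinarith [norm_nonneg U]

end Conv

section Plateau

variable {X : Type*} [TopologicalSpace X] [CompactSpace X] [T2Space X]
variable {A : Type*} [NormedRing A] [StarRing A] [CStarRing A] [CompleteSpace A]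
    [NormedAlgebra ℂ A] [StarModule ℂ A]

lemma exists_plateau (θ : C(X, ℂ) →⋆ₐ[ℂ] A) (a : A) (x : X) {ε : ℝ} (hε : 0 < ε) :
    ∃ (f : C(X, ℝ)) (U : Set X), IsOpen U ∧ x ∈ U ∧ (∀ y, f y ∈ Icc (0:ℝ) 1) ∧
      (∀ y ∈ U, f y = 1) ∧ ‖θ (cplx f) * a‖ ≤ fiberNorm θ x a + ε := by
  letI : CStarAlgebra A :=
    { ‹NormedRing A›, ‹StarRing A›, ‹CStarRing A›, ‹NormedAlgebra ℂ A›, ‹StarModule ℂ A›,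
      ‹CompleteSpace A› with }
  have hspan_ne : (Submodule.span ℂ
      {y : A | ∃ (f : C(X, ℂ)) (b : A), f x = 0 ∧ y = θ f * b} : Set A).Nonempty :=
    ⟨0, Submodule.zero_mem _⟩
  have hinf : Metric.infDist a (Submodule.span ℂ
      {y : A | ∃ (f : C(X, ℂ)) (b : A), f x = 0 ∧ y = θ f * b} : Set A) = fiberNorm θ x a := by
    rw [fiberNorm, fiberIdeal, Metric.infDist_closure]
  have hlt : Metric.infDist a (Submodule.span ℂ
      {y : A | ∃ (f : C(X, ℂ)) (b : A), f x = 0 ∧ y = θ f * b} : Set A)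
      < fiberNorm θ x a + ε / 2 := by rw [hinf]; linarith
  obtain ⟨b, hbmem, hbd⟩ := (Metric.infDist_lt_iff hspan_ne).mp hlt
  rw [SetLike.mem_coe] at hbmem
  obtain ⟨n, r, s, hsum⟩ := Submodule.mem_span_set'.mp hbmem
  choose F d hF hfd using fun i : Fin n => (s i).2
  set N : ℝ := (n : ℝ) + 1 with hN
  have hN0 : 0 < N := by positivity
  set e : Fin n → A := fun i => r i • d i with he
  set δ : Fin n → ℝ := fun i => ε / (2 * N * (1 + ‖e i‖)) with hδ
  have hδ0 : ∀ i, 0 < δ i := fun i => by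
    have : (0:ℝ) < 1 + ‖e i‖ := by positivity
    positivity
  have hb : ∑ i, θ (F i) * e i = b := by
    rw [← hsum]
    exact Finset.sum_congr rfl fun i _ => by rw [hfd i, mul_smul_comm]
  set W : Set X := ⋂ i, {y | ‖F i y‖ < δ i} with hW
  have hWo : IsOpen W :=
    isOpen_iInter_of_finite fun i =>
      isOpen_lt (continuous_norm.comp ((F i).continuous.comp continuous_id))
        continuous_const
  have hxW : x ∈ W := Set.mem_iInter.mpr fun i => by
    simp only [Set.mem_setOf_eq, hF i, norm_zero]; exact hδ0 i
  obtain ⟨U, hUo, hxU, hUW⟩ :=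
    normal_exists_closure_subset isClosed_singleton hWo (Set.singleton_subset_iff.mpr hxW)
  obtain ⟨f, hf0, hf1, hf01⟩ := exists_continuous_zero_one_of_isClosed
    (isClosed_compl_iff.mpr hWo) isClosed_closure
    (Set.disjoint_left.mpr fun y hyc hyU => hyc (hUW hyU))
  refine ⟨f, U, hUo, hxU rfl, hf01, fun y hy => hf1 (subset_closure hy), ?_⟩
  have hθnorm : ∀ h : C(X, ℂ), ‖θ h‖ ≤ ‖h‖ := fun h => NonUnitalStarAlgHom.norm_apply_le θ h
  have hfle : ∀ y, |f y| ≤ 1 := fun y => abs_le.mpr ⟨by linarith [(hf01 y).1], (hf01 y).2⟩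
  have hcf : ‖cplx f‖ ≤ 1 := by
    rw [ContinuousMap.norm_le _ zero_le_one]
    intro y
    simpa using hfle y
  have hsmall : ∀ i, ‖cplx f * F i‖ ≤ δ i := by
    intro i
    rw [ContinuousMap.norm_le _ (hδ0 i).le]
    intro y
    by_cases hyW : y ∈ W
    · have h1 : ‖F i y‖ < δ i := by
        have := Set.mem_iInter.mp hyW i; simpa using this
      calc ‖(cplx f * F i) y‖ = |f y| * ‖F i y‖ := by
            simp [Complex.norm_real]
        _ ≤ 1 * δ i := by
            exact mul_le_mul (hfle y) h1.le (norm_nonneg _) zero_le_one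
        _ = δ i := one_mul _
    · have : f y = 0 := hf0 hyW
      simp only [ContinuousMap.mul_apply, cplx_apply, this, Complex.ofReal_zero, zero_mul,
        norm_zero]
      exact (hδ0 i).le
  have hsplit : θ (cplx f) * a = θ (cplx f) * (a - b) + θ (cplx f) * b := by
    rw [mul_sub]; abel
  have hterm2 : ‖θ (cplx f) * b‖ ≤ ε / 2 := by
    have hexp : θ (cplx f) * b = ∑ i, θ (cplx f * F i) * e i := by
      rw [← hb, Finset.mul_sum]
      exact Finset.sum_congr rfl fun i _ => by rw [map_mul, mul_assoc]
    rw [hexp]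
    calc ‖∑ i, θ (cplx f * F i) * e i‖ ≤ ∑ i, ‖θ (cplx f * F i) * e i‖ :=
          norm_sum_le _ _
      _ ≤ ∑ i : Fin n, ε / (2 * N) := by
          refine Finset.sum_le_sum fun i _ => ?_
          calc ‖θ (cplx f * F i) * e i‖ ≤ ‖θ (cplx f * F i)‖ * ‖e i‖ := norm_mul_le _ _
            _ ≤ δ i * (1 + ‖e i‖) := by
                refine mul_le_mul ((hθnorm _).trans (hsmall i)) (by linarith)
                  (norm_nonneg _) (hδ0 i).le
            _ = ε / (2 * N) := by
                rw [hδ]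
                have h1 : (1:ℝ) + ‖e i‖ ≠ 0 := by positivity
                field_simp
      _ = n * (ε / (2 * N)) := by rw [Finset.sum_const, Finset.card_univ, Fintype.card_fin,
            nsmul_eq_mul]
      _ ≤ ε / 2 := by
          rw [mul_div_assoc', div_le_div_iff₀ (mul_pos two_pos hN0) (by norm_num : (0:ℝ) < 2),
            hN]
          nlinarith [hε.le, Nat.cast_nonneg (α := ℝ) n]
  have hterm1 : ‖θ (cplx f) * (a - b)‖ ≤ fiberNorm θ x a + ε / 2 := by
    calc ‖θ (cplx f) * (a - b)‖ ≤ ‖θ (cplx f)‖ * ‖a - b‖ := norm_mul_le _ _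
      _ ≤ 1 * ‖a - b‖ := by
          refine mul_le_mul_of_nonneg_right ((hθnorm _).trans hcf) (norm_nonneg _)
      _ ≤ fiberNorm θ x a + ε / 2 := by
          rw [one_mul, ← dist_eq_norm]; exact hbd.le
  calc ‖θ (cplx f) * a‖ ≤ ‖θ (cplx f) * (a - b)‖ + ‖θ (cplx f) * b‖ := by
        rw [hsplit]; exact norm_add_le _ _
    _ ≤ fiberNorm θ x a + ε / 2 + ε / 2 := add_le_add hterm1 hterm2
    _ = fiberNorm θ x a + ε := by ring

end Plateau

/-- For a unital `C(X)`-algebra `A` over a nonempty compact Hausdorff space `X` and every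
`a ∈ A`, the norm `‖a‖` is the supremum of the fiber seminorms `‖a_x‖`, and this supremum is
attained: `‖a‖` is the greatest element of `{‖a_x‖ : x ∈ X}`. -/
theorem isGreatest_fiberNorm {X : Type*} [TopologicalSpace X] [CompactSpace X] [T2Space X]
    [Nonempty X] {A : Type*} [NormedRing A] [StarRing A] [CStarRing A] [CompleteSpace A]
    [NormedAlgebra ℂ A] [StarModule ℂ A]
    (θ : C(X, ℂ) →⋆ₐ[ℂ] A) (hθ : ∀ (f : C(X, ℂ)) (a : A), θ f * a = a * θ f)
    (a : A) :
    IsGreatest (Set.range fun x : X => fiberNorm θ x a) ‖a‖ := by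
  have hub : ∀ x : X, fiberNorm θ x a ≤ ‖a‖ := by
    intro x
    have h0 : (0 : A) ∈ fiberIdeal θ x :=
      subset_closure (SetLike.mem_coe.mpr (Submodule.zero_mem _))
    have := Metric.infDist_le_dist_of_mem (x := a) h0
    rwa [dist_zero_right] at this
  constructor
  · -- the norm is attained
    by_contra hne
    have hlt : ∀ x : X, fiberNorm θ x a < ‖a‖ := fun x =>
      lt_of_le_of_ne (hub x) fun h => hne ⟨x, h⟩
    have hchoice : ∀ x : X, ∃ (f : C(X, ℝ)) (U : Set X), IsOpen U ∧ x ∈ U ∧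
        (∀ y, f y ∈ Icc (0:ℝ) 1) ∧ (∀ y ∈ U, f y = 1) ∧ ‖θ (cplx f) * a‖ < ‖a‖ := by
      intro x
      obtain ⟨f, U, hUo, hxU, h01, h1, hle⟩ := exists_plateau θ a x
        (show 0 < (‖a‖ - fiberNorm θ x a) / 2 by linarith [hlt x])
      exact ⟨f, U, hUo, hxU, h01, h1, by linarith [hlt x, hle]⟩
    choose f U hUo hxU h01 h1 hflt using hchoice
    obtain ⟨t, ht⟩ := isCompact_univ.elim_finite_subcover U hUo
      (fun y _ => Set.mem_iUnion.mpr ⟨y, hxU y⟩)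
    have htne : t.Nonempty := by
      obtain ⟨x0⟩ := ‹Nonempty X›
      obtain ⟨x, hx, -⟩ := Set.mem_iUnion₂.mp (ht (Set.mem_univ x0))
      exact ⟨x, hx⟩
    haveI : Nonempty {x // x ∈ t} := ⟨⟨htne.choose, htne.choose_spec⟩⟩
    have hcov : ⋃ i : {x // x ∈ t}, U i = Set.univ := by
      apply Set.eq_univ_of_univ_subset
      intro y hy
      obtain ⟨x, hx, hyx⟩ := Set.mem_iUnion₂.mp (ht hy)
      exact Set.mem_iUnion.mpr ⟨⟨x, hx⟩, hyx⟩
    obtain ⟨v, hvU, hvo, hvcl⟩ := exists_iUnion_eq_closure_subset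
      (fun i : {x // x ∈ t} => hUo i) (fun y => Set.toFinite _) hcov
    have hψex : ∀ i : {x // x ∈ t}, ∃ ψ : C(X, ℝ), Set.EqOn ψ 0 (U ↑i)ᶜ ∧
        Set.EqOn ψ 1 (closure (v i)) ∧ ∀ y, ψ y ∈ Icc (0:ℝ) 1 :=
      fun i => exists_continuous_zero_one_of_isClosed (isClosed_compl_iff.mpr (hUo ↑i))
        isClosed_closure (Set.disjoint_left.mpr fun y hyc hyv => hyc (hvcl i hyv))
    choose ψ hψ0 hψ1 hψ01 using hψex
    set σ : C(X, ℝ) := ∑ i : {x // x ∈ t}, ψ i with hσ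
    have hσpos : ∀ y, 0 < σ y := by
      intro y
      have hy : y ∈ ⋃ i, v i := hvU ▸ Set.mem_univ y
      obtain ⟨i, hyi⟩ := Set.mem_iUnion.mp hy
      have h1y : ψ i y = 1 := hψ1 i (subset_closure hyi)
      have hle : ψ i y ≤ ∑ j : {x // x ∈ t}, ψ j y :=
        Finset.single_le_sum (fun j _ => (hψ01 j y).1) (Finset.mem_univ i)
      have hσy : σ y = ∑ j : {x // x ∈ t}, ψ j y := by simp [hσ]
      rw [hσy]; rw [h1y] at hle; linarith
    set σinv : C(X, ℝ) := ⟨fun y => (σ y)⁻¹,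
      σ.continuous.inv₀ fun y => (hσpos y).ne'⟩ with hσinv
    set φ : {x // x ∈ t} → C(X, ℝ) := fun i => ψ i * σinv with hφ
    have hφ0 : ∀ i ∈ (Finset.univ : Finset {x // x ∈ t}), ∀ y, 0 ≤ φ i y :=
      fun i _ y => mul_nonneg (hψ01 i y).1 (inv_nonneg.mpr (hσpos y).le)
    have hφ1 : ∀ y, ∑ i : {x // x ∈ t}, φ i y = 1 := by
      intro y
      have : ∑ i : {x // x ∈ t}, φ i y = (∑ i : {x // x ∈ t}, ψ i y) * (σ y)⁻¹ := by
        rw [Finset.sum_mul]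
        exact Finset.sum_congr rfl fun i _ => rfl
      rw [this, show (∑ i : {x // x ∈ t}, ψ i y) = σ y by simp [hσ],
        mul_inv_cancel₀ (hσpos y).ne']
    set c : {x // x ∈ t} → A := fun i => θ (cplx (f ↑i)) * a with hcdef
    set M : ℝ := Finset.univ.sup' Finset.univ_nonempty fun i : {x // x ∈ t} => ‖c i‖ with hM
    have hc : ∀ i ∈ (Finset.univ : Finset {x // x ∈ t}), ‖c i‖ ≤ M :=
      fun i hi => Finset.le_sup' (fun j : {x // x ∈ t} => ‖c j‖) hi
    obtain ⟨i0⟩ := ‹Nonempty {x // x ∈ t}›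
    have hM0 : 0 ≤ M := (norm_nonneg (c i0)).trans (hc i0 (Finset.mem_univ i0))
    have hMlt : M < ‖a‖ := by
      rw [hM, Finset.sup'_lt_iff]
      exact fun i _ => hflt ↑i
    have hφf : ∀ i : {x // x ∈ t}, φ i * f ↑i = φ i := by
      intro i
      ext y
      by_cases hy : ψ i y = 0
      · simp [hφ, ContinuousMap.mul_apply, hy]
      · have hyU : y ∈ U ↑i := by
          by_contra hyc
          exact hy (hψ0 i hyc)
        simp [ContinuousMap.mul_apply, h1 ↑i y hyU]
    have key : ∑ i : {x // x ∈ t}, θ (cplx (φ i)) * c i = a := by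
      have hterm : ∀ i : {x // x ∈ t}, θ (cplx (φ i)) * c i = θ (cplx (φ i)) * a := by
        intro i
        rw [hcdef, ← mul_assoc, ← map_mul, ← cplx_mul, hφf i]
      rw [Finset.sum_congr rfl fun i _ => hterm i, ← Finset.sum_mul, ← map_sum, ← cplx_sum,
        show (∑ i : {x // x ∈ t}, φ i) = 1 by ext y; simpa using hφ1 y,
        cplx_one, map_one, one_mul]
    have hfin := convexity_bound θ hθ Finset.univ φ c hM0 hφ0 hφ1 hc
    rw [key] at hfin
    linarith
  · rintro r ⟨x, rfl⟩
    exact hub x
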